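/- arXiv:1504.05906 — 2 statements merged into one kernel-verified Lean document; each statement's English description precedes it below -/
import Mathlib

section
/- Let D be a dyadic grid, Q₀ ∈ D, 0 < α < n, and f ≥ 0 integrable on Q₀ with f finite a.e. Build a stopping collection S ⊆ D recursively: Q₀ ∈ S, and for each minimal P ∈ S, add to S all maximal Q ⊊ P in D with |Q|^{α/n}⟨f⟩_Q > 4|P|^{α/n}⟨f⟩_P. Then S is sparse: for every S ∈ S, ∑_{Q ∈ ch(S)} |Q| ≤ |S|/2, where ch(S) denotes the maximal S-descendants of S; consequently |S| ≤ 2|E_S| where E_S = S \ ⋃ ch(S). -/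
open MeasureTheory Set ENNReal

noncomputable section

/-- An axis-parallel cube in `ℝⁿ`. -/
structure Cube (n : ℕ) where
  corner : Fin n → ℝ
  side : ℝ
  side_pos : 0 < side

namespace Cube

/-- The underlying (half-open) set of a cube. -/
def toSet {n : ℕ} (Q : Cube n) : Set (Fin n → ℝ) :=
  {x | ∀ i, Q.corner i ≤ x i ∧ x i < Q.corner i + Q.side}

/-- The volume `|Q| = side^n` of a cube. -/
def vol {n : ℕ} (Q : Cube n) : ℝ := Q.side ^ n

end Cube

/-- A dyadic grid: cubes of dyadic side lengths, nested or disjoint, partitioning `ℝⁿ`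
at every scale. -/
def IsDyadicGrid {n : ℕ} (D : Set (Cube n)) : Prop :=
  (∀ Q ∈ D, ∃ k : ℤ, Q.side = 2 ^ k) ∧
  (∀ Q ∈ D, ∀ R ∈ D, (Q.toSet ∩ R.toSet).Nonempty →
      Q.toSet ⊆ R.toSet ∨ R.toSet ⊆ Q.toSet) ∧
  (∀ k : ℤ, (⋃ Q ∈ {Q ∈ D | Q.side = 2 ^ k}, Q.toSet) = univ)

/-- The average `⟨f⟩_Q^μ = (1/μ(Q)) ∫_Q f dμ`. -/
def avg {n : ℕ} (μ : Measure (Fin n → ℝ)) (f : (Fin n → ℝ) → ℝ≥0∞) (Q : Cube n) : ℝ≥0∞ :=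
  (∫⁻ x in Q.toSet, f x ∂μ) / μ Q.toSet

/-- The Lebesgue average `⟨f⟩_Q = (1/|Q|) ∫_Q f`. -/
def lebAvg {n : ℕ} (f : (Fin n → ℝ) → ℝ≥0∞) (Q : Cube n) : ℝ≥0∞ :=
  (∫⁻ x in Q.toSet, f x) / ENNReal.ofReal Q.vol

/-- `σ(Q) = ∫_Q σ dx`. -/
def wt {n : ℕ} (σ : (Fin n → ℝ) → ℝ≥0∞) (Q : Cube n) : ℝ≥0∞ :=
  ∫⁻ x in Q.toSet, σ x

/-- The weighted average `⟨f⟩_Q^σ = (1/σ(Q)) ∫_Q f σ dx`. -/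
def avgw {n : ℕ} (σ f : (Fin n → ℝ) → ℝ≥0∞) (Q : Cube n) : ℝ≥0∞ :=
  (∫⁻ x in Q.toSet, f x * σ x) / wt σ Q

/-- The dyadic fractional maximal operator `M_α^D`. -/
def dyFracMax {n : ℕ} (D : Set (Cube n)) (α : ℝ) (f : (Fin n → ℝ) → ℝ≥0∞)
    (x : Fin n → ℝ) : ℝ≥0∞ :=
  ⨆ (Q : Cube n) (_ : Q ∈ D) (_ : x ∈ Q.toSet),
    ENNReal.ofReal (Q.vol ^ (α / (n : ℝ))) * lebAvg f Q

/-- The fractional maximal operator `M_α` (supremum over all cubes). -/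
def fracMax {n : ℕ} (α : ℝ) (f : (Fin n → ℝ) → ℝ≥0∞) (x : Fin n → ℝ) : ℝ≥0∞ :=
  ⨆ (Q : Cube n) (_ : x ∈ Q.toSet), ENNReal.ofReal (Q.vol ^ (α / (n : ℝ))) * lebAvg f Q

/-- The Hardy–Littlewood maximal operator (over all cubes). -/
def hlMax {n : ℕ} (f : (Fin n → ℝ) → ℝ≥0∞) (x : Fin n → ℝ) : ℝ≥0∞ :=
  ⨆ (Q : Cube n) (_ : x ∈ Q.toSet), lebAvg f Q

/-- The entropy functional `ρ_σ(Q) = (1/σ(Q)) ∫_Q M(σ 1_Q)`. -/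
def entropy {n : ℕ} (σ : (Fin n → ℝ) → ℝ≥0∞) (Q : Cube n) : ℝ≥0∞ :=
  (∫⁻ x in Q.toSet, hlMax (Q.toSet.indicator σ) x) / wt σ Q

/-- The fractional integral operator `I_α f (x) = ∫ f(y) |x-y|^{α-n} dy`. -/
def fracInt {n : ℕ} (α : ℝ) (f : (Fin n → ℝ) → ℝ≥0∞) (x : Fin n → ℝ) : ℝ≥0∞ :=
  ∫⁻ y, f y * ENNReal.ofReal (Real.sqrt (∑ i, (x i - y i) ^ 2) ^ (α - (n : ℝ)))

/-- `Q` is a maximal element of `S` strictly contained in `P`. -/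
def IsMaxChild {n : ℕ} (S : Set (Cube n)) (P Q : Cube n) : Prop :=
  Q ∈ S ∧ Q.toSet ⊂ P.toSet ∧
    ∀ R ∈ S, R.toSet ⊂ P.toSet → Q.toSet ⊆ R.toSet → R.toSet ⊆ Q.toSet

/-- A sparse collection of cubes: the maximal elements strictly inside any `P` in the
collection have total volume at most `|P|/2`. -/
def IsSparse {n : ℕ} (S : Set (Cube n)) : Prop :=
  ∀ P ∈ S, (∑' Q : {Q : Cube n // IsMaxChild S P Q}, ENNReal.ofReal Q.1.vol)
      ≤ ENNReal.ofReal P.vol / 2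

/-- `P` is the `S`-parent of `Q`: the minimal element of `S` containing `Q`. -/
def IsSParent {n : ℕ} (S : Set (Cube n)) (Q P : Cube n) : Prop :=
  P ∈ S ∧ Q.toSet ⊆ P.toSet ∧ ∀ R ∈ S, Q.toSet ⊆ R.toSet → P.toSet ⊆ R.toSet

/-- The separated-bump entropy functional
`ϱ_σ^{α,p,q}(Q) = σ(Q)^{-q/p} ∫_Q M_α(1_Q σ)^{q/p}`. -/
def sepRho {n : ℕ} (α p q : ℝ) (σ : (Fin n → ℝ) → ℝ≥0∞) (Q : Cube n) : ℝ≥0∞ :=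
  (∫⁻ x in Q.toSet, fracMax α (Q.toSet.indicator σ) x ^ (q / p)) / wt σ Q ^ (q / p)

/-- The separated entropy bump constant `[[σ,w]]_{α,p,q}` with bump function `ε`. -/
def sepBump {n : ℕ} (α p q : ℝ) (ε : ℝ → ℝ) (σ w : (Fin n → ℝ) → ℝ≥0∞) : ℝ≥0∞ :=
  ⨆ Q : Cube n,
    (ENNReal.ofReal (Q.vol ^ (α / (n : ℝ))) * lebAvg σ Q) ^ (q * (1 - 1 / p)) *
      lebAvg w Q * sepRho α p q σ Q * ENNReal.ofReal (ε (sepRho α p q σ Q).toReal)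

/-- The one-bump entropy quantity for the fractional maximal operator:
`β(Q) = |Q|^{α/n-1} σ(Q)^{1/p'} w(Q)^{1/q} ρ_σ(Q)^{1/p} ε_q(ρ_σ(Q))`. -/
def maxBump {n : ℕ} (α p q : ℝ) (εq : ℝ → ℝ) (σ w : (Fin n → ℝ) → ℝ≥0∞)
    (Q : Cube n) : ℝ≥0∞ :=
  ENNReal.ofReal (Q.vol ^ (α / (n : ℝ) - 1)) * wt σ Q ^ (1 - 1 / p) * wt w Q ^ (1 / q) *
    entropy σ Q ^ (1 / p) * ENNReal.ofReal (εq (entropy σ Q).toReal)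

/-- The one-bump entropy quantity for the fractional integral operator:
`β(Q) = |Q|^{α/n-1} σ(Q)^{1/p'} w(Q)^{1/q} ρ_σ(Q)^{1/p} ε_p(ρ_σ(Q)) ρ_w(Q)^{1/q'} ε_{q'}(ρ_w(Q))`. -/
def intBump {n : ℕ} (α p q : ℝ) (εp εq' : ℝ → ℝ) (σ w : (Fin n → ℝ) → ℝ≥0∞)
    (Q : Cube n) : ℝ≥0∞ :=
  ENNReal.ofReal (Q.vol ^ (α / (n : ℝ) - 1)) * wt σ Q ^ (1 - 1 / p) * wt w Q ^ (1 / q) *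
    entropy σ Q ^ (1 / p) * ENNReal.ofReal (εp (entropy σ Q).toReal) *
    entropy w Q ^ (1 - 1 / q) * ENNReal.ofReal (εq' (entropy w Q).toReal)

/-- The stopping children of `P`: maximal `Q ⊊ P` in `D` with
`|Q|^{α/n}⟨f⟩_Q > 4 |P|^{α/n}⟨f⟩_P`. -/
def stopChild {n : ℕ} (D : Set (Cube n)) (α : ℝ) (f : (Fin n → ℝ) → ℝ≥0∞)
    (P Q : Cube n) : Prop :=
  Q ∈ D ∧ Q.toSet ⊂ P.toSet ∧
    4 * (ENNReal.ofReal (P.vol ^ (α/(n:ℝ))) * lebAvg f P) <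
      ENNReal.ofReal (Q.vol ^ (α/(n:ℝ))) * lebAvg f Q ∧
    ∀ R ∈ D, R.toSet ⊂ P.toSet →
      4 * (ENNReal.ofReal (P.vol ^ (α/(n:ℝ))) * lebAvg f P) <
        ENNReal.ofReal (R.vol ^ (α/(n:ℝ))) * lebAvg f R →
      Q.toSet ⊆ R.toSet → R.toSet ⊆ Q.toSet

namespace Cube

lemma vol_pos {n : ℕ} (Q : Cube n) : 0 < Q.vol := pow_pos Q.side_pos n

lemma corner_mem {n : ℕ} (Q : Cube n) : Q.corner ∈ Q.toSet :=
  fun i => ⟨le_refl _, by linarith [Q.side_pos]⟩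

lemma toSet_eq_pi {n : ℕ} (Q : Cube n) :
    Q.toSet = Set.pi univ (fun i => Set.Ico (Q.corner i) (Q.corner i + Q.side)) := by
  ext x; simp [toSet, Set.mem_pi, Set.mem_Ico]

lemma measurableSet_toSet {n : ℕ} (Q : Cube n) : MeasurableSet Q.toSet := by
  rw [toSet_eq_pi]; exact MeasurableSet.univ_pi fun i => measurableSet_Ico

lemma volume_toSet {n : ℕ} (Q : Cube n) : volume Q.toSet = ENNReal.ofReal Q.vol := by
  rw [toSet_eq_pi, volume_pi_pi]
  simp only [Real.volume_Ico, add_sub_cancel_left]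
  rw [Finset.prod_const, Finset.card_univ, Fintype.card_fin,
    ← ENNReal.ofReal_pow Q.side_pos.le]
  rfl

lemma toSet_inj {n : ℕ} (hn : 0 < n) {Q R : Cube n} (h : Q.toSet = R.toSet) : Q = R := by
  have h1 : Q.corner ∈ R.toSet := h ▸ Q.corner_mem
  have h2 : R.corner ∈ Q.toSet := h.symm ▸ R.corner_mem
  have hc : Q.corner = R.corner := funext fun i => le_antisymm (h2 i).1 (h1 i).1
  have key : ∀ (A B : Cube n), A.toSet = B.toSet → A.corner = B.corner → A.side ≤ B.side := by
    intro A B hAB hcc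
    by_contra hlt
    push_neg at hlt
    set i0 : Fin n := ⟨0, hn⟩
    have hx : Function.update A.corner i0 (A.corner i0 + B.side) ∈ A.toSet := by
      intro i
      by_cases hi : i = i0
      · subst hi
        simp only [Function.update_self]
        exact ⟨by linarith [B.side_pos], by linarith⟩
      · rw [Function.update_of_ne hi]
        exact ⟨le_refl _, by linarith [A.side_pos]⟩
    rw [hAB] at hx
    have := (hx i0).2
    rw [Function.update_self, ← hcc] at this
    linarith
  have hs : Q.side = R.side := le_antisymm (key Q R h hc) (key R Q h.symm hc.symm)
  cases Q; cases R
  simp only at hc hs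
  subst hc; subst hs; rfl

end Cube

/-- the stopping collection built from fractional-average stopping is sparse:
at every node `P` of the stopping tree the stopping children have total volume at most
`|P|/2`, and consequently `|P| ≤ 2|E_P|`. -/
theorem stmt5 (n : ℕ) (α : ℝ) (hα : 0 < α) (hαn : α < n)
    (D : Set (Cube n)) (hD : IsDyadicGrid D) (Q₀ : Cube n) (hQ₀ : Q₀ ∈ D)
    (f : (Fin n → ℝ) → ℝ≥0∞) (hf : Measurable f)
    (hfin : (∫⁻ x in Q₀.toSet, f x) ≠ ∞) (hae : ∀ᵐ x, f x ≠ ∞) :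
    ∀ P ∈ D, P.toSet ⊆ Q₀.toSet →
      (∑' Q : {Q : Cube n // stopChild D α f P Q}, ENNReal.ofReal Q.1.vol)
          ≤ ENNReal.ofReal P.vol / 2 ∧
      ENNReal.ofReal P.vol
          ≤ 2 * volume (P.toSet \ ⋃ Q ∈ {Q | stopChild D α f P Q}, Cube.toSet Q) := by
  have hn : 0 < n := by exact_mod_cast Nat.cast_pos.mp (hα.trans hαn)
  obtain ⟨-, hnest, -⟩ := hD
  intro P hP hPQ₀
  set IP := ∫⁻ x in P.toSet, f x with hIPdef
  have hIPfin : IP ≠ ∞ := ne_top_of_le_ne_top hfin (lintegral_mono_set hPQ₀)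
  have hvP0 : ENNReal.ofReal P.vol ≠ 0 := by
    simp [ENNReal.ofReal_eq_zero, not_le, P.vol_pos]
  have hvPfin : ENNReal.ofReal P.vol ≠ ∞ := ENNReal.ofReal_ne_top
  by_cases hIP0 : IP = 0
  · -- no stopping children
    have hempty : ∀ Q : Cube n, ¬ stopChild D α f P Q := by
      intro Q hQ
      obtain ⟨hQD, hQsub, hlt, -⟩ := hQ
      have hIQ : (∫⁻ x in Q.toSet, f x) = 0 :=
        le_antisymm (hIP0 ▸ lintegral_mono_set hQsub.subset) zero_le
      have : lebAvg f Q = 0 := by simp [lebAvg, hIQ]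
      rw [this, mul_zero] at hlt
      exact (not_lt.mpr zero_le) hlt
    have hisE : IsEmpty {Q : Cube n // stopChild D α f P Q} :=
      ⟨fun Q => hempty Q.1 Q.2⟩
    have hset : {Q : Cube n | stopChild D α f P Q} = ∅ := by
      ext Q; simp [hempty Q]
    constructor
    · have hz : (∑' Q : {Q : Cube n // stopChild D α f P Q}, ENNReal.ofReal Q.1.vol) = 0 :=
        ENNReal.tsum_eq_zero.mpr (fun Q => absurd Q.2 (hempty Q.1))
      rw [hz]; exact zero_le
    · rw [hset]
      simp only [Set.mem_empty_iff_false, Set.iUnion_of_empty, Set.iUnion_empty, Set.diff_empty]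
      rw [P.volume_toSet]
      exact le_mul_of_one_le_left zero_le one_le_two
  · -- main case
    set cP : ℝ≥0∞ := ENNReal.ofReal (P.vol ^ (α/(n:ℝ))) with hcPdef
    have hcP0 : cP ≠ 0 := by
      simp [hcPdef, ENNReal.ofReal_eq_zero, not_le,
        Real.rpow_pos_of_pos P.vol_pos]
    -- per-child volume bound
    have hkey : ∀ Q : Cube n, stopChild D α f P Q →
        ENNReal.ofReal Q.vol ≤ (∫⁻ x in Q.toSet, f x) *
          (ENNReal.ofReal P.vol / (4 * IP)) := by
      intro Q hQ
      obtain ⟨hQD, hQsub, hlt, -⟩ := hQ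
      set IQ := ∫⁻ x in Q.toSet, f x with hIQdef
      have hvQ0 : ENNReal.ofReal Q.vol ≠ 0 := by
        simp [ENNReal.ofReal_eq_zero, not_le, Q.vol_pos]
      have hvol_le : Q.vol ≤ P.vol := by
        have : volume Q.toSet ≤ volume P.toSet := measure_mono hQsub.subset
        rw [Q.volume_toSet, P.volume_toSet] at this
        exact (ENNReal.ofReal_le_ofReal_iff P.vol_pos.le).mp this
      have hr : ENNReal.ofReal (Q.vol ^ (α/(n:ℝ))) ≤ cP :=
        ENNReal.ofReal_le_ofReal
          (Real.rpow_le_rpow Q.vol_pos.le hvol_le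
            (div_nonneg hα.le (Nat.cast_nonneg n)))
      have hlt2 : 4 * (cP * lebAvg f P) < cP * lebAvg f Q :=
        lt_of_lt_of_le hlt (mul_le_mul_left hr _)
      rw [mul_left_comm] at hlt2
      have hlt3 : 4 * lebAvg f P < lebAvg f Q :=
        (ENNReal.mul_lt_mul_iff_right hcP0 ENNReal.ofReal_ne_top).mp hlt2
      -- lebAvg f P = IP / vP, lebAvg f Q = IQ / vQ
      simp only [lebAvg] at hlt3
      have hle : 4 * (IP / ENNReal.ofReal P.vol) ≤ IQ / ENNReal.ofReal Q.vol := hlt3.le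
      have h4 : 4 * IP ≤ (IQ / ENNReal.ofReal Q.vol) * ENNReal.ofReal P.vol := by
        calc 4 * IP = 4 * (IP / ENNReal.ofReal P.vol * ENNReal.ofReal P.vol) := by
              rw [ENNReal.div_mul_cancel hvP0 hvPfin]
          _ = 4 * (IP / ENNReal.ofReal P.vol) * ENNReal.ofReal P.vol := by ring
          _ ≤ (IQ / ENNReal.ofReal Q.vol) * ENNReal.ofReal P.vol :=
              mul_le_mul_left hle _
      have h5 : ENNReal.ofReal Q.vol * (4 * IP) ≤ IQ * ENNReal.ofReal P.vol := by
        calc ENNReal.ofReal Q.vol * (4 * IP)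
            ≤ ENNReal.ofReal Q.vol * ((IQ / ENNReal.ofReal Q.vol) * ENNReal.ofReal P.vol) :=
              mul_le_mul_right h4 _
          _ = (IQ / ENNReal.ofReal Q.vol * ENNReal.ofReal Q.vol) * ENNReal.ofReal P.vol := by
              ring
          _ = IQ * ENNReal.ofReal P.vol := by
              rw [ENNReal.div_mul_cancel hvQ0 ENNReal.ofReal_ne_top]
      have h6 : ENNReal.ofReal Q.vol ≤ IQ * ENNReal.ofReal P.vol / (4 * IP) :=
        (ENNReal.le_div_iff_mul_le (Or.inl (by simp [hIP0]))
          (Or.inl (ENNReal.mul_ne_top (by norm_num) hIPfin))).mpr h5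
      rwa [mul_div_assoc] at h6
    -- disjointness of children
    have hdisj : Pairwise (Function.onFun Disjoint
        (fun Q : {Q : Cube n // stopChild D α f P Q} => Q.1.toSet)) := by
      intro Q R hne
      show Disjoint Q.1.toSet R.1.toSet
      by_contra hnd
      rw [Set.not_disjoint_iff_nonempty_inter] at hnd
      have heq : Q.1.toSet = R.1.toSet := by
        rcases hnest Q.1 Q.2.1 R.1 R.2.1 hnd with hsub | hsub
        · exact le_antisymm hsub (Q.2.2.2.2 R.1 R.2.1 R.2.2.1 R.2.2.2.1 hsub)
        · exact le_antisymm (R.2.2.2.2 Q.1 Q.2.1 Q.2.2.1 Q.2.2.2.1 hsub) hsub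
      exact hne (Subtype.ext (Cube.toSet_inj hn heq))
    -- sum of child f-masses is at most IP
    have hmass : (∑' Q : {Q : Cube n // stopChild D α f P Q},
        ∫⁻ x in Q.1.toSet, f x) ≤ IP := by
      have h1 : (∑' Q : {Q : Cube n // stopChild D α f P Q},
          (volume.withDensity f) Q.1.toSet)
          ≤ (volume.withDensity f) (⋃ Q : {Q : Cube n // stopChild D α f P Q}, Q.1.toSet) :=
        tsum_meas_le_meas_iUnion_of_disjoint _ (fun Q => Q.1.measurableSet_toSet) hdisj
      have h2 : (⋃ Q : {Q : Cube n // stopChild D α f P Q}, Q.1.toSet) ⊆ P.toSet :=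
        Set.iUnion_subset fun Q => Q.2.2.1.subset
      calc (∑' Q : {Q : Cube n // stopChild D α f P Q}, ∫⁻ x in Q.1.toSet, f x)
          = ∑' Q : {Q : Cube n // stopChild D α f P Q},
              (volume.withDensity f) Q.1.toSet := by
            congr 1; funext Q; rw [withDensity_apply f Q.1.measurableSet_toSet]
        _ ≤ (volume.withDensity f) (⋃ Q : {Q : Cube n // stopChild D α f P Q}, Q.1.toSet) :=
            h1
        _ ≤ (volume.withDensity f) P.toSet := measure_mono h2
        _ = IP := withDensity_apply f P.measurableSet_toSet
    -- sparseness bound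
    have hsum : (∑' Q : {Q : Cube n // stopChild D α f P Q}, ENNReal.ofReal Q.1.vol)
        ≤ ENNReal.ofReal P.vol / 2 := by
      calc (∑' Q : {Q : Cube n // stopChild D α f P Q}, ENNReal.ofReal Q.1.vol)
          ≤ ∑' Q : {Q : Cube n // stopChild D α f P Q},
              (∫⁻ x in Q.1.toSet, f x) * (ENNReal.ofReal P.vol / (4 * IP)) :=
            ENNReal.tsum_le_tsum fun Q => hkey Q.1 Q.2
        _ = (∑' Q : {Q : Cube n // stopChild D α f P Q}, ∫⁻ x in Q.1.toSet, f x) *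
              (ENNReal.ofReal P.vol / (4 * IP)) := ENNReal.tsum_mul_right
        _ ≤ IP * (ENNReal.ofReal P.vol / (4 * IP)) := mul_le_mul_left hmass _
        _ = IP * ENNReal.ofReal P.vol / (IP * 4) := by
            rw [mul_div_assoc, mul_comm 4 IP]
        _ = ENNReal.ofReal P.vol / 4 := ENNReal.mul_div_mul_left _ _ hIP0 hIPfin
        _ ≤ ENNReal.ofReal P.vol / 2 := ENNReal.div_le_div_left (by norm_num) _
    refine ⟨hsum, ?_⟩
    -- countability of children
    have hcnt : Countable {Q : Cube n // stopChild D α f P Q} := by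
      have := MeasureTheory.Measure.countable_meas_pos_of_disjoint_iUnion
        (μ := volume) (fun Q : {Q : Cube n // stopChild D α f P Q} =>
          Q.1.measurableSet_toSet) hdisj
      have huniv : {Q : {Q : Cube n // stopChild D α f P Q} | 0 < volume Q.1.toSet}
          = Set.univ := by
        ext Q
        simp only [Set.mem_setOf_eq, Set.mem_univ, iff_true, Q.1.volume_toSet]
        simp [ENNReal.ofReal_pos, Q.1.vol_pos]
      rw [huniv] at this
      exact Set.countable_univ_iff.mp this
    have hU : (⋃ Q ∈ {Q : Cube n | stopChild D α f P Q}, Cube.toSet Q)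
        = ⋃ Q : {Q : Cube n // stopChild D α f P Q}, Q.1.toSet := by
      rw [Set.biUnion_eq_iUnion]; rfl
    set U := ⋃ Q ∈ {Q : Cube n | stopChild D α f P Q}, Cube.toSet Q with hUdef
    have hUm : MeasurableSet U := by
      rw [hU]
      exact MeasurableSet.iUnion fun Q => Q.1.measurableSet_toSet
    have hsplit : volume (P.toSet ∩ U) + volume (P.toSet \ U) = volume P.toSet :=
      measure_inter_add_diff _ hUm
    have hfirst : volume (P.toSet ∩ U) ≤ ENNReal.ofReal P.vol / 2 := by
      calc volume (P.toSet ∩ U) ≤ volume U := measure_mono (Set.inter_subset_right)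
        _ ≤ ∑' Q : {Q : Cube n // stopChild D α f P Q}, volume Q.1.toSet := by
            rw [hU]; exact measure_iUnion_le _
        _ = ∑' Q : {Q : Cube n // stopChild D α f P Q}, ENNReal.ofReal Q.1.vol := by
            congr 1; funext Q; exact Q.1.volume_toSet
        _ ≤ ENNReal.ofReal P.vol / 2 := hsum
    have hhalf : ENNReal.ofReal P.vol / 2 ≤ volume (P.toSet \ U) := by
      have h1 : ENNReal.ofReal P.vol / 2 + ENNReal.ofReal P.vol / 2
          ≤ ENNReal.ofReal P.vol / 2 + volume (P.toSet \ U) := by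
        rw [ENNReal.add_halves]
        calc ENNReal.ofReal P.vol = volume P.toSet := P.volume_toSet.symm
          _ = volume (P.toSet ∩ U) + volume (P.toSet \ U) := hsplit.symm
          _ ≤ ENNReal.ofReal P.vol / 2 + volume (P.toSet \ U) :=
              add_le_add_left hfirst _
      exact (ENNReal.add_le_add_iff_left
        (by simp [ENNReal.div_eq_top, hvPfin])).mp h1
    calc ENNReal.ofReal P.vol = 2 * (ENNReal.ofReal P.vol / 2) := by
          rw [ENNReal.mul_div_cancel (by norm_num) (by norm_num)]
      _ ≤ 2 * volume (P.toSet \ U) := mul_le_mul_right hhalf _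
end
end

section
/- Let 1 < p ≤ q < ∞, 0 < α < n, σ a weight, S a sparse collection of dyadic cubes contained in Q₀ with pairwise disjoint sets E_S ⊆ S satisfying |E_S| ≃ |S| (E_S = S minus its S-children), and suppose ϱ_σ^{α,p,q}(S) ≃ 2^r for all S ∈ S, where ϱ_σ^{α,p,q}(Q) = σ(Q)^{-q/p}∫_Q M_α(𝟙_Q σ)^{q/p}dx. Then ∑_{S∈S} (|S|^{α/n}⟨σ⟩_S)^{q/p}|S| ≲ 2^r σ(Q₀)^{q/p}. -/
open MeasureTheory Set ENNReal

noncomputable section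

section Aux

variable {n : ℕ}

lemma Cube.corner_mem_toSet (Q : Cube n) : Q.corner ∈ Q.toSet :=
  fun i => ⟨le_rfl, by linarith [Q.side_pos]⟩

lemma Cube.toSet_nonempty (Q : Cube n) : Q.toSet.Nonempty := ⟨Q.corner, Q.corner_mem_toSet⟩

lemma Cube.vol_pos_s18 (Q : Cube n) : 0 < Q.vol := pow_pos Q.side_pos n

lemma Cube.toSet_eq_pi_s18 (Q : Cube n) :
    Q.toSet = Set.pi univ (fun i => Ico (Q.corner i) (Q.corner i + Q.side)) := by
  ext x; simp [Cube.toSet, Set.mem_pi, mem_Ico]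

lemma Cube.measurableSet_toSet_s18 (Q : Cube n) : MeasurableSet Q.toSet := by
  rw [Q.toSet_eq_pi_s18]
  exact MeasurableSet.univ_pi fun i => measurableSet_Ico

lemma Cube.volume_toSet_s18 (Q : Cube n) : volume Q.toSet = ENNReal.ofReal Q.vol := by
  rw [Q.toSet_eq_pi_s18, volume_pi_pi]
  simp only [Real.volume_Ico, add_sub_cancel_left]
  rw [Finset.prod_const, Finset.card_univ, Fintype.card_fin,
    ← ENNReal.ofReal_pow Q.side_pos.le]
  rfl

lemma Cube.corner_le_of_subset {Q R : Cube n} (h : Q.toSet ⊆ R.toSet) (i : Fin n) :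
    R.corner i ≤ Q.corner i :=
  (h Q.corner_mem_toSet i).1

lemma Cube.key_pt {Q R : Cube n} (h : Q.toSet ⊆ R.toSet) (i : Fin n) {ε : ℝ}
    (hε : 0 < ε) (hεs : ε ≤ Q.side) :
    Q.corner i + Q.side - ε < R.corner i + R.side := by
  have hx : Function.update Q.corner i (Q.corner i + Q.side - ε) ∈ Q.toSet := by
    intro j
    rcases eq_or_ne j i with rfl | hj
    · rw [Function.update_self]; constructor <;> linarith
    · rw [Function.update_of_ne hj]
      exact ⟨le_rfl, by linarith [Q.side_pos]⟩
  have := (h hx i).2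
  rwa [Function.update_self] at this

lemma Cube.side_le_of_subset (hn : n ≠ 0) {Q R : Cube n} (h : Q.toSet ⊆ R.toSet) :
    Q.side ≤ R.side := by
  set i : Fin n := ⟨0, Nat.pos_of_ne_zero hn⟩
  by_contra hlt
  push_neg at hlt
  have h1 := Q.key_pt (R := R) h i (ε := (Q.side - R.side) / 2)
    (by linarith) (by linarith [R.side_pos])
  have h2 := Q.corner_le_of_subset h i
  linarith

lemma Cube.eq_of_subset_side_eq (hn : n ≠ 0) {Q R : Cube n} (h : Q.toSet ⊆ R.toSet)
    (hs : Q.side = R.side) : Q = R := by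
  have hc : ∀ i, Q.corner i = R.corner i := by
    intro i
    refine le_antisymm (le_of_forall_pos_le_add fun ε hε => ?_) (Q.corner_le_of_subset h i)
    have h1 := Q.key_pt (R := R) h i (ε := min ε Q.side)
      (lt_min hε Q.side_pos) (min_le_right _ _)
    have h2 : min ε Q.side ≤ ε := min_le_left _ _
    linarith [hs ▸ h1]
  obtain ⟨qc, qs, _⟩ := Q
  obtain ⟨rc, rs, _⟩ := R
  simp only [Cube.mk.injEq]
  exact ⟨funext hc, hs⟩

lemma Cube.eq_of_toSet_subset_subset (hn : n ≠ 0) {Q R : Cube n}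
    (h1 : Q.toSet ⊆ R.toSet) (h2 : R.toSet ⊆ Q.toSet) : Q = R :=
  Cube.eq_of_subset_side_eq hn h1
    (le_antisymm (Cube.side_le_of_subset hn h1) (Cube.side_le_of_subset hn h2))

lemma Cube.finite_between (hn : n ≠ 0) {D : Set (Cube n)} (hD : IsDyadicGrid D)
    {P Q : Cube n} (hPD : P ∈ D) (hQD : Q ∈ D) :
    {R | R ∈ D ∧ P.toSet ⊆ R.toSet ∧ R.toSet ⊆ Q.toSet}.Finite := by
  obtain ⟨kP, hkP⟩ := hD.1 P hPD
  obtain ⟨kQ, hkQ⟩ := hD.1 Q hQD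
  have hsub : {R | R ∈ D ∧ P.toSet ⊆ R.toSet ∧ R.toSet ⊆ Q.toSet} ⊆
      ⋃ k ∈ (Finset.Icc kP kQ : Finset ℤ),
        {R | R.side = (2:ℝ)^k ∧ R ∈ D ∧ P.toSet ⊆ R.toSet ∧ R.toSet ⊆ Q.toSet} := by
    rintro R ⟨hRD, hPR, hRQ⟩
    obtain ⟨k, hk⟩ := hD.1 R hRD
    have h1 : kP ≤ k := by
      have := Cube.side_le_of_subset hn hPR
      rw [hkP, hk] at this
      exact (zpow_le_zpow_iff_right₀ (by norm_num : (1:ℝ) < 2)).mp this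
    have h2 : k ≤ kQ := by
      have := Cube.side_le_of_subset hn hRQ
      rw [hkQ, hk] at this
      exact (zpow_le_zpow_iff_right₀ (by norm_num : (1:ℝ) < 2)).mp this
    exact Set.mem_biUnion (Finset.mem_coe.mpr (Finset.mem_Icc.mpr ⟨h1, h2⟩)) ⟨hk, hRD, hPR, hRQ⟩
  refine Set.Finite.subset (Set.Finite.biUnion (Finset.Icc kP kQ).finite_toSet
    fun k _ => ?_) hsub
  refine Set.Subsingleton.finite ?_
  rintro R₁ ⟨hs₁, hD₁, hP₁, _⟩ R₂ ⟨hs₂, hD₂, hP₂, _⟩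
  have hint : (R₁.toSet ∩ R₂.toSet).Nonempty :=
    ⟨P.corner, hP₁ P.corner_mem_toSet, hP₂ P.corner_mem_toSet⟩
  have hside : R₁.side = R₂.side := by rw [hs₁, hs₂]
  rcases hD.2.1 R₁ hD₁ R₂ hD₂ hint with h | h
  · exact Cube.eq_of_subset_side_eq hn h hside
  · exact (Cube.eq_of_subset_side_eq hn h hside.symm).symm

lemma Cube.exists_dominating (hn : n ≠ 0) {D S : Set (Cube n)} (hD : IsDyadicGrid D)
    (hSD : S ⊆ D) {Q₀ : Cube n} (hQ₀D : Q₀ ∈ D) (hSQ₀ : ∀ P ∈ S, P.toSet ⊆ Q₀.toSet)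
    {P : Cube n} (hP : P ∈ S) :
    ∃ M ∈ S, P.toSet ⊆ M.toSet ∧ ∀ R ∈ S, P.toSet ⊆ R.toSet → R.toSet ⊆ M.toSet := by
  set Up := {R | R ∈ S ∧ P.toSet ⊆ R.toSet} with hUp
  have hfin : Up.Finite := by
    refine Set.Finite.subset (Cube.finite_between hn hD (hSD hP) hQ₀D) ?_
    rintro R ⟨hRS, hPR⟩
    exact ⟨hSD hRS, hPR, hSQ₀ R hRS⟩
  obtain ⟨M, hM, hMmax'⟩ := Set.Finite.exists_maximalFor Cube.side Up hfin ⟨P, hP, Subset.rfl⟩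
  have hMmax : ∀ R ∈ Up, M.side ≤ R.side → M.side = R.side :=
    fun R hR h => le_antisymm h (hMmax' hR h)
  refine ⟨M, hM.1, hM.2, ?_⟩
  intro R hRS hPR
  have hRUp : R ∈ Up := ⟨hRS, hPR⟩
  have hint : (M.toSet ∩ R.toSet).Nonempty :=
    ⟨P.corner, hM.2 P.corner_mem_toSet, hPR P.corner_mem_toSet⟩
  rcases hD.2.1 M (hSD hM.1) R (hSD hRS) hint with h | h
  · have hside := hMmax R hRUp (Cube.side_le_of_subset hn h)
    rw [Cube.eq_of_subset_side_eq hn h hside]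
  · exact h

lemma Cube.exists_maxChild (hn : n ≠ 0) {D S : Set (Cube n)} (hD : IsDyadicGrid D)
    (hSD : S ⊆ D) {P R : Cube n} (hP : P ∈ S) (hR : R ∈ S) (hRP : R.toSet ⊂ P.toSet) :
    ∃ M, IsMaxChild S P M ∧ R.toSet ⊆ M.toSet := by
  set Up := {R' | R' ∈ S ∧ R.toSet ⊆ R'.toSet ∧ R'.toSet ⊂ P.toSet} with hUp
  have hfin : Up.Finite := by
    refine Set.Finite.subset (Cube.finite_between hn hD (hSD hR) (hSD hP)) ?_
    rintro R' ⟨hR'S, hRR', hR'P⟩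
    exact ⟨hSD hR'S, hRR', hR'P.subset⟩
  obtain ⟨M, hM, hMmax'⟩ := Set.Finite.exists_maximalFor Cube.side Up hfin ⟨R, hR, Subset.rfl, hRP⟩
  have hMmax : ∀ R ∈ Up, M.side ≤ R.side → M.side = R.side :=
    fun R hR h => le_antisymm h (hMmax' hR h)
  refine ⟨M, ⟨hM.1, hM.2.2, ?_⟩, hM.2.1⟩
  intro R' hR'S hR'P hMR'
  have hR'Up : R' ∈ Up := ⟨hR'S, hM.2.1.trans hMR', hR'P⟩
  have hside := hMmax R' hR'Up (Cube.side_le_of_subset hn hMR')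
  rw [Cube.eq_of_subset_side_eq hn hMR' hside]

lemma Cube.countable_of_subset_grid (hn : n ≠ 0) {D S : Set (Cube n)}
    (hD : IsDyadicGrid D) (hSD : S ⊆ D) : S.Countable := by
  rw [← Set.countable_coe_iff]
  have h1 : ∀ P : ↥S, ∃ k : ℤ, (P:Cube n).side = 2^k := fun P => hD.1 _ (hSD P.2)
  choose k hk using h1
  have h2 : ∀ P : ↥S, ∃ qf : Fin n → ℚ, (fun i => (qf i : ℝ)) ∈ (P:Cube n).toSet := by
    intro P
    have : ∀ i, ∃ qi : ℚ, (P:Cube n).corner i < (qi:ℝ) ∧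
        (qi:ℝ) < (P:Cube n).corner i + (P:Cube n).side :=
      fun i => exists_rat_btwn (lt_add_of_pos_right _ (P:Cube n).side_pos)
    choose qf hq using this
    exact ⟨qf, fun i => ⟨(hq i).1.le, (hq i).2⟩⟩
  choose qp hqp using h2
  have hinj : Function.Injective (fun P : ↥S => (k P, qp P)) := by
    intro P₁ P₂ h
    rw [Prod.mk.injEq] at h
    have hside : (P₁:Cube n).side = (P₂:Cube n).side := by
      rw [hk P₁, hk P₂, h.1]
    have hint : ((P₁:Cube n).toSet ∩ (P₂:Cube n).toSet).Nonempty :=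
      ⟨fun i => (qp P₁ i : ℝ), hqp P₁, by rw [h.2]; exact hqp P₂⟩
    have := hD.2.1 _ (hSD P₁.2) _ (hSD P₂.2) hint
    rcases this with hsub | hsub
    · exact Subtype.ext (Cube.eq_of_subset_side_eq hn hsub hside)
    · exact Subtype.ext (Cube.eq_of_subset_side_eq hn hsub hside.symm).symm
  exact hinj.countable

lemma ENNReal.tsum_rpow_le_rpow_tsum {ι : Type*} (f : ι → ℝ≥0∞) {s : ℝ} (hs : 1 ≤ s) :
    ∑' i, f i ^ s ≤ (∑' i, f i) ^ s := by
  set T := ∑' i, f i with hT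
  rcases eq_or_ne T ∞ with hTtop | hTtop
  · rw [hTtop, ENNReal.top_rpow_of_pos (by linarith)]
    exact le_top
  have key : ∀ i, f i ^ s ≤ T ^ (s - 1) * f i := by
    intro i
    rcases eq_or_ne (f i) 0 with h0 | h0
    · rw [h0, ENNReal.zero_rpow_of_pos (by linarith), mul_zero]
    have hfi : f i ≠ ∞ := ne_top_of_le_ne_top hTtop (ENNReal.le_tsum i)
    calc f i ^ s = f i ^ (s - 1) * f i := by
          conv_lhs => rw [show s = (s-1)+1 by ring]
          rw [ENNReal.rpow_add _ _ h0 hfi, ENNReal.rpow_one]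
      _ ≤ T ^ (s-1) * f i :=
          mul_le_mul_left (ENNReal.rpow_le_rpow (ENNReal.le_tsum i) (by linarith)) _
  calc ∑' i, f i ^ s ≤ ∑' i, T ^ (s-1) * f i := ENNReal.tsum_le_tsum key
    _ = T ^ (s-1) * T := ENNReal.tsum_mul_left
    _ = T ^ s := by
        rcases eq_or_ne T 0 with h0 | h0
        · rw [h0, mul_zero, ENNReal.zero_rpow_of_pos (by linarith)]
        · conv_rhs => rw [show s = (s-1)+1 by ring]
          rw [ENNReal.rpow_add _ _ h0 hTtop, ENNReal.rpow_one]

lemma tsum_setLIntegral_le {β : Type*} [MeasurableSpace β] {μ : Measure β}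
    {ι : Type*} [Countable ι] (g : β → ℝ≥0∞)
    {A : ι → Set β} (hm : ∀ i, MeasurableSet (A i))
    (hd : Pairwise (Function.onFun Disjoint A)) {B : Set β} (hB : ∀ i, A i ⊆ B) :
    ∑' i, ∫⁻ x in A i, g x ∂μ ≤ ∫⁻ x in B, g x ∂μ := by
  calc ∑' i, ∫⁻ x in A i, g x ∂μ
      = ∫⁻ x, g x ∂(Measure.sum fun i => μ.restrict (A i)) :=
        (lintegral_sum_measure g _).symm
    _ = ∫⁻ x in ⋃ i, A i, g x ∂μ := by rw [Measure.restrict_iUnion hd hm]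
    _ ≤ ∫⁻ x in B, g x ∂μ :=
        lintegral_mono' (Measure.restrict_mono (iUnion_subset hB) le_rfl) le_rfl

end Aux

/-- the stopping-cube estimate
`∑_{S∈S} (|S|^{α/n}⟨σ⟩_S)^{q/p} |S| ≲ 2^r σ(Q₀)^{q/p}` when `ϱ_σ^{α,p,q}(S) ≃ 2^r`. -/
theorem stmt18 (n : ℕ) (p q α : ℝ) (hp : 1 < p) (hpq : p ≤ q) (hα : 0 < α) (hαn : α < n) :
    ∃ C : ℝ≥0∞, C ≠ ∞ ∧
    ∀ (σ : (Fin n → ℝ) → ℝ≥0∞), Measurable σ →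
    ∀ (D : Set (Cube n)), IsDyadicGrid D →
    ∀ Q₀ ∈ D, ∀ S : Set (Cube n), S ⊆ D → IsSparse S →
      (∀ P ∈ S, P.toSet ⊆ Q₀.toSet) →
    ∀ E : Cube n → Set (Fin n → ℝ), (∀ P, E P ⊆ P.toSet) →
      (∀ P R : Cube n, P ≠ R → Disjoint (E P) (E R)) →
      (∀ P ∈ S, ENNReal.ofReal P.vol ≤ 2 * volume (E P)) →
    ∀ r : ℕ,
      (∀ P ∈ S, (2:ℝ≥0∞) ^ ((r:ℝ) - 1) ≤ sepRho α p q σ P ∧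
        sepRho α p q σ P ≤ (2:ℝ≥0∞) ^ ((r:ℝ) + 1)) →
      (∑' P : S, (ENNReal.ofReal (P.1.vol ^ (α/(n:ℝ))) * lebAvg σ P.1) ^ (q/p) *
          ENNReal.ofReal P.1.vol)
        ≤ C * (2:ℝ≥0∞) ^ (r:ℝ) * wt σ Q₀ ^ (q/p) := by
  have hp0 : 0 < p := lt_trans one_pos hp
  have hs1 : 1 ≤ q / p := (one_le_div hp0).mpr hpq
  have hs0 : 0 < q / p := lt_of_lt_of_le one_pos hs1
  refine ⟨4, by norm_num, ?_⟩
  intro σ hσ D hD Q₀ hQ₀D S hSD hSparse hSQ₀ E hE1 hE2 hE3 r hrho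
  clear hE1 hE2 hE3
  have hn : n ≠ 0 := by
    have h : (0:ℝ) < n := lt_trans hα hαn
    exact fun h0 => by rw [h0] at h; norm_num at h
  -- the infinite-mass case is trivial
  rcases eq_or_ne (wt σ Q₀) ∞ with hW | hW
  · rw [hW, ENNReal.top_rpow_of_pos hs0, ENNReal.mul_top]
    · exact le_top
    · exact mul_ne_zero (by norm_num)
        (ENNReal.rpow_pos (by norm_num) ENNReal.ofNat_ne_top).ne'
  -- choose, for each cube of S, a dominating maximal cube
  have hmaxex : ∀ P : ↥S, ∃ M, M ∈ S ∧ (P:Cube n).toSet ⊆ M.toSet ∧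
      ∀ R ∈ S, (P:Cube n).toSet ⊆ R.toSet → R.toSet ⊆ M.toSet := by
    intro P
    obtain ⟨M, hM, h1, h2⟩ := Cube.exists_dominating hn hD hSD hQ₀D hSQ₀ P.2
    exact ⟨M, hM, h1, h2⟩
  choose m hmS hmsub hmdom using hmaxex
  have hScount : S.Countable := Cube.countable_of_subset_grid hn hD hSD
  haveI : Countable ↥S := hScount.to_subtype
  -- measurable exceptional sets
  set U : Cube n → Set (Fin n → ℝ) :=
    fun P => ⋃ (R : ↥S) (_ : (R:Cube n).toSet ⊂ P.toSet), (R:Cube n).toSet with hU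
  set E' : Cube n → Set (Fin n → ℝ) := fun P => P.toSet \ U P with hE'def
  have hE'meas : ∀ P, MeasurableSet (E' P) := fun P =>
    P.measurableSet_toSet_s18.diff (MeasurableSet.iUnion fun R =>
      MeasurableSet.iUnion fun _ => Cube.measurableSet_toSet_s18 _)
  have hE'sub : ∀ P, E' P ⊆ P.toSet := fun P => diff_subset
  have hE'disj : ∀ P₁ ∈ S, ∀ P₂ ∈ S, P₁ ≠ P₂ → Disjoint (E' P₁) (E' P₂) := by
    have key : ∀ P₁ ∈ S, ∀ P₂ : Cube n, P₁.toSet ⊂ P₂.toSet →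
        Disjoint (E' P₁) (E' P₂) := by
      intro P₁ h₁ P₂ hss
      refine Set.disjoint_left.mpr fun x hx₁ hx₂ => ?_
      have hxU : x ∈ U P₂ :=
        Set.mem_iUnion.mpr ⟨⟨P₁, h₁⟩, Set.mem_iUnion.mpr ⟨hss, hE'sub _ hx₁⟩⟩
      exact hx₂.2 hxU
    intro P₁ h₁ P₂ h₂ hne
    by_cases hint : (P₁.toSet ∩ P₂.toSet).Nonempty
    · rcases hD.2.1 _ (hSD h₁) _ (hSD h₂) hint with hsub | hsub
      · refine key P₁ h₁ P₂ (ssubset_of_subset_of_ne hsub fun he => hne ?_)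
        exact Cube.eq_of_toSet_subset_subset hn hsub (he ▸ Subset.rfl)
      · refine (key P₂ h₂ P₁ (ssubset_of_subset_of_ne hsub fun he => hne.symm ?_)).symm
        exact Cube.eq_of_toSet_subset_subset hn hsub (he ▸ Subset.rfl)
    · exact Set.disjoint_of_subset (hE'sub _) (hE'sub _)
        (Set.disjoint_iff_inter_eq_empty.mpr (Set.not_nonempty_iff_eq_empty.mp hint))
  have hE'vol : ∀ P ∈ S, ENNReal.ofReal P.vol ≤ 2 * volume (E' P) := by
    intro P hP
    have hUsub : U P ⊆ ⋃ Q : {Q : Cube n // IsMaxChild S P Q}, (Q:Cube n).toSet := by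
      intro x hx
      rcases Set.mem_iUnion.mp hx with ⟨R, hx'⟩
      rcases Set.mem_iUnion.mp hx' with ⟨hRP, hxR⟩
      obtain ⟨M, hM, hRM⟩ := Cube.exists_maxChild hn hD hSD hP R.2 hRP
      exact Set.mem_iUnion.mpr ⟨⟨M, hM⟩, hRM hxR⟩
    haveI : Countable {Q : Cube n // IsMaxChild S P Q} :=
      (hScount.mono (fun Q hQ => hQ.1 : {Q : Cube n | IsMaxChild S P Q} ⊆ S)).to_subtype
    have hUvol : volume (U P) ≤ ENNReal.ofReal P.vol / 2 := by
      refine le_trans (measure_mono hUsub) (le_trans (measure_iUnion_le _) ?_)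
      calc ∑' Q : {Q : Cube n // IsMaxChild S P Q}, volume (Q:Cube n).toSet
          = ∑' Q : {Q : Cube n // IsMaxChild S P Q}, ENNReal.ofReal (Q:Cube n).vol := by
            exact tsum_congr fun Q => Cube.volume_toSet_s18 _
        _ ≤ ENNReal.ofReal P.vol / 2 := hSparse P hP
    have hsplit : ENNReal.ofReal P.vol ≤ volume (E' P) + ENNReal.ofReal P.vol / 2 := by
      calc ENNReal.ofReal P.vol = volume P.toSet := (Cube.volume_toSet_s18 P).symm
        _ ≤ volume (E' P ∪ U P) := measure_mono fun x hx => by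
            by_cases h : x ∈ U P
            · exact Or.inr h
            · exact Or.inl ⟨hx, h⟩
        _ ≤ volume (E' P) + volume (U P) := measure_union_le _ _
        _ ≤ volume (E' P) + ENNReal.ofReal P.vol / 2 := add_le_add_right hUvol _
    have h2 := tsub_le_iff_right.mpr hsplit
    rw [ENNReal.sub_half ENNReal.ofReal_ne_top] at h2
    rw [mul_comm]
    exact (ENNReal.div_le_iff_le_mul (Or.inl (by norm_num))
      (Or.inl ENNReal.ofNat_ne_top)).mp h2
  -- Step 1: pointwise domination on each cube of S
  have step1 : ∀ P : ↥S,
      (ENNReal.ofReal ((P:Cube n).vol ^ (α/(n:ℝ))) * lebAvg σ (P:Cube n)) ^ (q/p) *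
        ENNReal.ofReal (P:Cube n).vol
      ≤ 2 * ∫⁻ x in E' (P:Cube n), fracMax α ((m P).toSet.indicator σ) x ^ (q/p) := by
    intro P
    set c := ENNReal.ofReal ((P:Cube n).vol ^ (α/(n:ℝ))) * lebAvg σ (P:Cube n) with hc
    have havg : lebAvg ((m P).toSet.indicator σ) (P:Cube n) = lebAvg σ (P:Cube n) := by
      unfold lebAvg
      congr 1
      rw [lintegral_indicator (m P).measurableSet_toSet_s18,
        Measure.restrict_restrict (m P).measurableSet_toSet_s18,
        Set.inter_eq_self_of_subset_right (hmsub P)]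
    have hpt : ∀ x ∈ E' (P:Cube n),
        c ^ (q/p) ≤ fracMax α ((m P).toSet.indicator σ) x ^ (q/p) := by
      intro x hx
      refine ENNReal.rpow_le_rpow ?_ hs0.le
      have hxP : x ∈ (P:Cube n).toSet := hE'sub _ hx
      calc c = ENNReal.ofReal ((P:Cube n).vol ^ (α/(n:ℝ))) *
            lebAvg ((m P).toSet.indicator σ) (P:Cube n) := by rw [havg]
        _ ≤ fracMax α ((m P).toSet.indicator σ) x :=
            le_iSup₂ (f := fun (Q : Cube n) (_ : x ∈ Q.toSet) =>
              ENNReal.ofReal (Q.vol ^ (α / (n:ℝ))) *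
                lebAvg ((m P).toSet.indicator σ) Q) (P:Cube n) hxP
    calc c ^ (q/p) * ENNReal.ofReal (P:Cube n).vol
        = c ^ (q/p) * volume (P:Cube n).toSet := by rw [Cube.volume_toSet_s18]
      _ ≤ c ^ (q/p) * (2 * volume (E' (P:Cube n))) := by
          rw [Cube.volume_toSet_s18]
          exact mul_le_mul_right (hE'vol _ P.2) _
      _ = 2 * (c ^ (q/p) * volume (E' (P:Cube n))) := by ring
      _ ≤ 2 * ∫⁻ x in E' (P:Cube n), fracMax α ((m P).toSet.indicator σ) x ^ (q/p) := by
          refine mul_le_mul_right ?_ 2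
          calc c ^ (q/p) * volume (E' (P:Cube n))
              = ∫⁻ _ in E' (P:Cube n), c ^ (q/p) := (setLIntegral_const _ _).symm
            _ ≤ _ := setLIntegral_mono' (hE'meas _) hpt
  -- disjointness of the maximal cubes
  have hmaxdisj : ∀ P₁ P₂ : ↥S, m P₁ ≠ m P₂ →
      Disjoint (m P₁).toSet (m P₂).toSet := by
    intro P₁ P₂ hne
    by_contra hnd
    obtain ⟨x, hx₁, hx₂⟩ := Set.not_disjoint_iff.mp hnd
    have hint : ((m P₁).toSet ∩ (m P₂).toSet).Nonempty := ⟨x, hx₁, hx₂⟩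
    rcases hD.2.1 _ (hSD (hmS P₁)) _ (hSD (hmS P₂)) hint with hsub | hsub
    · have hback := hmdom P₁ (m P₂) (hmS P₂) ((hmsub P₁).trans hsub)
      exact hne (Cube.eq_of_toSet_subset_subset hn hsub hback)
    · have hback := hmdom P₂ (m P₁) (hmS P₁) ((hmsub P₂).trans hsub)
      exact hne (Cube.eq_of_toSet_subset_subset hn hback hsub)
  -- bound the integral over each maximal cube via sepRho
  have hfiberbound : ∀ y ∈ S,
      (∫⁻ x in y.toSet, fracMax α (y.toSet.indicator σ) x ^ (q/p))
        ≤ (2:ℝ≥0∞)^((r:ℝ)+1) * wt σ y ^ (q/p) := by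
    intro y hy
    have hrho' := (hrho y hy).2
    have hb : wt σ y ^ (q/p) ≠ ∞ := by
      refine ENNReal.rpow_ne_top_of_nonneg hs0.le (ne_top_of_le_ne_top hW ?_)
      exact lintegral_mono_set (hSQ₀ y hy)
    have := (ENNReal.div_le_iff_le_mul
      (Or.inr (ENNReal.rpow_ne_top_of_nonneg (by positivity) ENNReal.ofNat_ne_top))
      (Or.inl hb)).mp hrho'
    exact this
  -- Step 2: sum the integrals, grouping by maximal cube
  have step2 : (∑' P : ↥S, ∫⁻ x in E' (P:Cube n),
        fracMax α ((m P).toSet.indicator σ) x ^ (q/p))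
      ≤ (2:ℝ≥0∞)^((r:ℝ)+1) * wt σ Q₀ ^ (q/p) := by
    set G : ↥S → ℝ≥0∞ := fun P =>
      ∫⁻ x in E' (P:Cube n), fracMax α ((m P).toSet.indicator σ) x ^ (q/p) with hG
    have hre : ∑' P : ↥S, G P = ∑' y : Cube n, ∑' P : {P : ↥S // m P = y}, G P.1 := by
      rw [← (Equiv.sigmaFiberEquiv m).tsum_eq G]
      exact ENNReal.tsum_sigma' _
    rw [hre]
    have hinner : ∀ y : Cube n, (∑' P : {P : ↥S // m P = y}, G P.1)
        ≤ Set.indicator (Set.range m)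
            (fun y => (2:ℝ≥0∞)^((r:ℝ)+1) * wt σ y ^ (q/p)) y := by
      intro y
      by_cases hy : y ∈ Set.range m
      · rw [Set.indicator_of_mem hy]
        obtain ⟨P₀, hP₀⟩ := hy
        have hyS : y ∈ S := hP₀ ▸ hmS P₀
        have hGeq : ∀ P : {P : ↥S // m P = y}, G P.1 =
            ∫⁻ x in E' ((P.1 : ↥S):Cube n), fracMax α (y.toSet.indicator σ) x ^ (q/p) := by
          intro P
          rw [hG]
          simp only [P.2]
        rw [tsum_congr hGeq]
        have hdisj : Pairwise (Function.onFun Disjoint fun P : {P : ↥S // m P = y} =>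
            E' ((P.1 : ↥S):Cube n)) := by
          intro P₁ P₂ hne
          refine hE'disj _ P₁.1.2 _ P₂.1.2 fun hc => hne ?_
          exact Subtype.ext (Subtype.ext hc)
        have hsubY : ∀ P : {P : ↥S // m P = y},
            E' ((P.1 : ↥S):Cube n) ⊆ y.toSet := by
          intro P
          refine (hE'sub _).trans ?_
          have := hmsub P.1
          rwa [P.2] at this
        calc ∑' P : {P : ↥S // m P = y},
              ∫⁻ x in E' ((P.1 : ↥S):Cube n), fracMax α (y.toSet.indicator σ) x ^ (q/p)
            ≤ ∫⁻ x in y.toSet, fracMax α (y.toSet.indicator σ) x ^ (q/p) :=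
              tsum_setLIntegral_le _ (fun P => hE'meas _) hdisj hsubY
          _ ≤ (2:ℝ≥0∞)^((r:ℝ)+1) * wt σ y ^ (q/p) := hfiberbound y hyS
      · rw [Set.indicator_of_notMem hy]
        haveI : IsEmpty {P : ↥S // m P = y} := ⟨fun P => hy ⟨P.1, P.2⟩⟩
        rw [tsum_empty]
    calc ∑' y : Cube n, ∑' P : {P : ↥S // m P = y}, G P.1
        ≤ ∑' y : Cube n, Set.indicator (Set.range m)
            (fun y => (2:ℝ≥0∞)^((r:ℝ)+1) * wt σ y ^ (q/p)) y := ENNReal.tsum_le_tsum hinner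
      _ = ∑' y : (Set.range m), (2:ℝ≥0∞)^((r:ℝ)+1) * wt σ (y:Cube n) ^ (q/p) :=
          (tsum_subtype _ _).symm
      _ = (2:ℝ≥0∞)^((r:ℝ)+1) * ∑' y : (Set.range m), wt σ (y:Cube n) ^ (q/p) :=
          ENNReal.tsum_mul_left
      _ ≤ (2:ℝ≥0∞)^((r:ℝ)+1) * wt σ Q₀ ^ (q/p) := by
          refine mul_le_mul_right ?_ _
          haveI : Countable ↥(Set.range m) := (Set.countable_range m).to_subtype
          calc ∑' y : (Set.range m), wt σ (y:Cube n) ^ (q/p)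
              ≤ (∑' y : (Set.range m), wt σ (y:Cube n)) ^ (q/p) :=
                ENNReal.tsum_rpow_le_rpow_tsum _ hs1
            _ ≤ wt σ Q₀ ^ (q/p) := by
                refine ENNReal.rpow_le_rpow ?_ hs0.le
                refine tsum_setLIntegral_le σ
                  (fun y => Cube.measurableSet_toSet_s18 _) ?_ ?_
                · intro y₁ y₂ hne
                  obtain ⟨P₁, hP₁⟩ := y₁.2
                  obtain ⟨P₂, hP₂⟩ := y₂.2
                  have : m P₁ ≠ m P₂ := by
                    rw [hP₁, hP₂]
                    exact fun hc => hne (Subtype.ext hc)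
                  have hd := hmaxdisj P₁ P₂ this
                  rw [hP₁, hP₂] at hd
                  exact hd
                · intro y
                  obtain ⟨P, hP⟩ := y.2
                  exact hSQ₀ _ (hP ▸ hmS P)
  -- put everything together
  calc (∑' P : ↥S, (ENNReal.ofReal ((P:Cube n).vol ^ (α/(n:ℝ))) *
          lebAvg σ (P:Cube n)) ^ (q/p) * ENNReal.ofReal (P:Cube n).vol)
      ≤ ∑' P : ↥S, 2 * ∫⁻ x in E' (P:Cube n),
          fracMax α ((m P).toSet.indicator σ) x ^ (q/p) := ENNReal.tsum_le_tsum step1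
    _ = 2 * ∑' P : ↥S, ∫⁻ x in E' (P:Cube n),
          fracMax α ((m P).toSet.indicator σ) x ^ (q/p) := ENNReal.tsum_mul_left
    _ ≤ 2 * ((2:ℝ≥0∞)^((r:ℝ)+1) * wt σ Q₀ ^ (q/p)) := mul_le_mul_right step2 2
    _ = 4 * (2:ℝ≥0∞) ^ (r:ℝ) * wt σ Q₀ ^ (q/p) := by
        rw [ENNReal.rpow_add _ _ (by norm_num) ENNReal.ofNat_ne_top, ENNReal.rpow_one]
        ring
end
end
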